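/- For any collection of jointly distributed finite random variables X', S, U_1, ..., U_k, the sum of pairwise mutual informations satisfies: sum_{j=1}^k I(X'; U_j) ≤ I(X'; S) + H(U_1,...,U_k | S) + C(U_1,...,U_k), where C denotes total correlation C(U_1,...,U_k) = sum_j H(U_j) - H(U_1,...,U_k). -/

import Mathlib

open Real
open scoped Classical BigOperators

set_option linter.unusedSectionVars false
set_option maxHeartbeats 1000000

/-- Push-forward of a (sub)probability mass function `p` on `Ω` along `f : Ω → β`:
the distribution of the random variable `f`. -/
noncomputable def pmap {Ω β : Type*} [Fintype Ω] (f : Ω → β) (p : Ω → ℝ) : β → ℝ :=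
  fun b => ∑ a, if f a = b then p a else 0

/-- Shannon entropy (natural log) of a mass function on a finite type. -/
noncomputable def ent {α : Type*} [Fintype α] (p : α → ℝ) : ℝ :=
  -∑ a, p a * Real.log (p a)

/-- `p` is a probability mass function. -/
def IsPMF {α : Type*} [Fintype α] (p : α → ℝ) : Prop :=
  (∀ a, 0 ≤ p a) ∧ ∑ a, p a = 1

/-- Entropy `H(X)` of the random variable `X` under joint distribution `p` on `Ω`. -/
noncomputable def H {Ω α : Type*} [Fintype Ω] [Fintype α] (X : Ω → α) (p : Ω → ℝ) : ℝ :=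
  ent (pmap X p)

/-- Conditional entropy `H(X | Y) = H(X, Y) - H(Y)`. -/
noncomputable def condH {Ω α β : Type*} [Fintype Ω] [Fintype α] [Fintype β]
    (X : Ω → α) (Y : Ω → β) (p : Ω → ℝ) : ℝ :=
  ent (pmap (fun ω => (X ω, Y ω)) p) - ent (pmap Y p)

/-- Mutual information `I(X;Y) = H(X) + H(Y) - H(X,Y)`. -/
noncomputable def mi {Ω α β : Type*} [Fintype Ω] [Fintype α] [Fintype β]
    (X : Ω → α) (Y : Ω → β) (p : Ω → ℝ) : ℝ :=
  ent (pmap X p) + ent (pmap Y p) - ent (pmap (fun ω => (X ω, Y ω)) p)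

/-- Kullback–Leibler divergence `KL(q ‖ p)` on a finite type. -/
noncomputable def KL {α : Type*} [Fintype α] (q p : α → ℝ) : ℝ :=
  ∑ a, q a * Real.log (q a / p a)

section aux
variable {Ω α β γ : Type*} [Fintype Ω] [Fintype α] [Fintype β] [Fintype γ]

lemma pmap_nonneg (f : Ω → α) {p : Ω → ℝ} (hp : ∀ a, 0 ≤ p a) (b : α) :
    0 ≤ pmap f p b := by
  refine Finset.sum_nonneg fun a _ => ?_
  split <;> simp [hp a]

lemma pmap_sum (f : Ω → α) (p : Ω → ℝ) : ∑ b, pmap f p b = ∑ a, p a := by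
  unfold pmap
  rw [Finset.sum_comm]
  simp

lemma le_pmap (f : Ω → α) {p : Ω → ℝ} (hp : ∀ a, 0 ≤ p a) (a : Ω) :
    p a ≤ pmap f p (f a) := by
  unfold pmap
  have := Finset.single_le_sum (f := fun a' => if f a' = f a then p a' else 0)
    (fun i _ => by split <;> simp [hp i]) (Finset.mem_univ a)
  simpa using this

lemma pmap_comp (g : α → β) (f : Ω → α) (p : Ω → ℝ) :
    pmap g (pmap f p) = pmap (fun a => g (f a)) p := by
  funext b
  unfold pmap
  have h : ∀ a : α, (if g a = b then ∑ a1, if f a1 = a then p a1 else 0 else 0)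
      = ∑ a1, if f a1 = a then (if g a = b then p a1 else 0) else 0 := by
    intro a; split <;> simp
  rw [Finset.sum_congr rfl fun a _ => h a, Finset.sum_comm]
  refine Finset.sum_congr rfl fun ω _ => ?_
  simp

lemma pmap_marg_right (g : Ω → α) (h : Ω → β) (p : Ω → ℝ) (c : α) :
    ∑ b, pmap (fun a => (g a, h a)) p (c, b) = pmap g p c := by
  unfold pmap
  rw [Finset.sum_comm]
  refine Finset.sum_congr rfl fun ω _ => ?_
  simp [Prod.ext_iff, ite_and]

lemma pmap_marg_left (g : Ω → α) (h : Ω → β) (p : Ω → ℝ) (b : β) :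
    ∑ c, pmap (fun a => (g a, h a)) p (c, b) = pmap h p b := by
  unfold pmap
  rw [Finset.sum_comm]
  refine Finset.sum_congr rfl fun ω _ => ?_
  simp [Prod.ext_iff, ite_and]

lemma ent_eq (f : Ω → α) (p : Ω → ℝ) :
    ent (pmap f p) = -∑ a, p a * Real.log (pmap f p (f a)) := by
  unfold ent
  congr 1
  have h : ∀ b : α, pmap f p b * Real.log (pmap f p b)
      = ∑ a, if f a = b then p a * Real.log (pmap f p b) else 0 := by
    intro b
    rw [show pmap f p b = ∑ a, if f a = b then p a else 0 from rfl, Finset.sum_mul]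
    refine Finset.sum_congr rfl fun a _ => ?_
    split <;> simp
  rw [Finset.sum_congr rfl fun b _ => h b, Finset.sum_comm]
  refine Finset.sum_congr rfl fun ω _ => ?_
  simp

lemma gibbs {V : Type*} [Fintype V] {q r : V → ℝ} (hq : ∀ v, 0 ≤ q v)
    (hr : ∀ v, 0 ≤ r v) (hz : ∀ v, r v = 0 → q v = 0) (hs : ∑ v, r v ≤ ∑ v, q v) :
    ∑ v, q v * Real.log (r v / q v) ≤ 0 := by
  have key : ∀ v, q v * Real.log (r v / q v) ≤ r v - q v := by
    intro v
    rcases eq_or_lt_of_le (hq v) with h | h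
    · simp only [← h, zero_mul, mul_zero]
      simpa using hr v
    · have hrpos : 0 < r v := lt_of_le_of_ne (hr v) fun e => by
        have := hz v e.symm; linarith
      have hdiv : 0 < r v / q v := div_pos hrpos h
      have hl := Real.log_le_sub_one_of_pos hdiv
      calc q v * Real.log (r v / q v) ≤ q v * (r v / q v - 1) := by nlinarith
        _ = r v - q v := by field_simp
  calc ∑ v, q v * Real.log (r v / q v) ≤ ∑ v, (r v - q v) :=
        Finset.sum_le_sum fun v _ => key v
    _ = ∑ v, r v - ∑ v, q v := Finset.sum_sub_distrib _ _
    _ ≤ 0 := by linarith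

lemma ent_pmap_inj {φ : α → β} (hφ : Function.Injective φ) (q : α → ℝ) :
    ent (pmap φ q) = ent q := by
  unfold ent
  congr 1
  have h1 : ∀ a, pmap φ q (φ a) = q a := by
    intro a
    unfold pmap
    simp [hφ.eq_iff]
  have h2 : ∀ b, b ∉ Finset.image φ Finset.univ → pmap φ q b = 0 := by
    intro b hb
    unfold pmap
    refine Finset.sum_eq_zero fun a _ => ?_
    rw [if_neg]
    intro e
    exact hb (Finset.mem_image.mpr ⟨a, Finset.mem_univ a, e⟩)
  rw [← Finset.sum_subset (Finset.subset_univ (Finset.image φ Finset.univ))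
      (fun b _ hb => by rw [h2 b hb]; simp),
    Finset.sum_image (fun a _ a' _ e => hφ e)]
  simp [h1]

lemma ent_mono (X : Ω → α) (Y : Ω → β) {p : Ω → ℝ} (hp0 : ∀ a, 0 ≤ p a) :
    ent (pmap Y p) ≤ ent (pmap (fun ω => (X ω, Y ω)) p) := by
  have hq0 : ∀ v, 0 ≤ pmap (fun ω => (X ω, Y ω)) p v := pmap_nonneg _ hp0
  have hY : pmap Y p = pmap (fun v : α × β => v.2) (pmap (fun ω => (X ω, Y ω)) p) := by
    rw [pmap_comp]
  set q := pmap (fun ω => (X ω, Y ω)) p with hqdef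
  rw [hY, ent_eq]
  show _ ≤ -∑ v, q v * Real.log (q v)
  refine neg_le_neg (Finset.sum_le_sum fun v _ => ?_)
  rcases eq_or_lt_of_le (hq0 v) with h | h
  · simp [← h]
  · exact mul_le_mul_of_nonneg_left
      (Real.log_le_log h (le_pmap (fun v : α × β => v.2) hq0 v)) (hq0 v)

lemma ent_submod (Y : Ω → β) (W : Ω → α) (Z : Ω → γ) {p : Ω → ℝ} (hp : IsPMF p) :
    ent (pmap (fun ω => (Y ω, (W ω, Z ω))) p) + ent (pmap Y p) ≤
      ent (pmap (fun ω => (Y ω, W ω)) p) + ent (pmap (fun ω => (Y ω, Z ω)) p) := by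
  set q := pmap (fun ω => (Y ω, (W ω, Z ω))) p with hqdef
  have hq0 : ∀ v, 0 ≤ q v := pmap_nonneg _ hp.1
  have hq1 : ∑ v, q v = 1 := by rw [hqdef, pmap_sum _ p, hp.2]
  have hY : pmap Y p = pmap (fun v : β × α × γ => v.1) q := by rw [hqdef, pmap_comp]
  have hYW : pmap (fun ω => (Y ω, W ω)) p
      = pmap (fun v : β × α × γ => (v.1, v.2.1)) q := by rw [hqdef, pmap_comp]
  have hYZ : pmap (fun ω => (Y ω, Z ω)) p
      = pmap (fun v : β × α × γ => (v.1, v.2.2)) q := by rw [hqdef, pmap_comp]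
  set qY := pmap (fun v : β × α × γ => v.1) q with hqY
  set qYW := pmap (fun v : β × α × γ => (v.1, v.2.1)) q with hqYW
  set qYZ := pmap (fun v : β × α × γ => (v.1, v.2.2)) q with hqYZ
  have hY0 : ∀ y, 0 ≤ qY y := pmap_nonneg _ hq0
  have hYW0 : ∀ v, 0 ≤ qYW v := pmap_nonneg _ hq0
  have hYZ0 : ∀ v, 0 ≤ qYZ v := pmap_nonneg _ hq0
  have hleY : ∀ v : β × α × γ, q v ≤ qY v.1 :=
    fun v => le_pmap (fun v : β × α × γ => v.1) hq0 v
  have hleYW : ∀ v : β × α × γ, q v ≤ qYW (v.1, v.2.1) :=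
    fun v => le_pmap (fun v : β × α × γ => (v.1, v.2.1)) hq0 v
  have hleYZ : ∀ v : β × α × γ, q v ≤ qYZ (v.1, v.2.2) :=
    fun v => le_pmap (fun v : β × α × γ => (v.1, v.2.2)) hq0 v
  -- the comparison distribution
  set r : β × α × γ → ℝ := fun v => qYW (v.1, v.2.1) * qYZ (v.1, v.2.2) / qY v.1 with hrdef
  have hr0 : ∀ v, 0 ≤ r v := fun v =>
    div_nonneg (mul_nonneg (hYW0 _) (hYZ0 _)) (hY0 _)
  have hrpos : ∀ v, 0 < q v → 0 < r v := by
    intro v hv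
    exact div_pos (mul_pos (lt_of_lt_of_le hv (hleYW v)) (lt_of_lt_of_le hv (hleYZ v)))
      (lt_of_lt_of_le hv (hleY v))
  have hz : ∀ v, r v = 0 → q v = 0 := by
    intro v hrv
    by_contra h
    have := hrpos v (lt_of_le_of_ne (hq0 v) (Ne.symm h))
    linarith
  have hmargW : ∀ y, ∑ w, qYW (y, w) = qY y := fun y => pmap_marg_right _ _ q y
  have hmargZ : ∀ y, ∑ z, qYZ (y, z) = qY y := fun y => pmap_marg_right _ _ q y
  have hs : ∑ v, r v ≤ ∑ v, q v := by
    rw [hq1, Fintype.sum_prod_type]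
    have inner : ∀ y, (∑ wz : α × γ, r (y, wz)) ≤ qY y := by
      intro y
      rw [Fintype.sum_prod_type]
      have e1 : ∀ w, ∑ z, r (y, (w, z)) = qYW (y, w) * ((∑ z, qYZ (y, z)) / qY y) := by
        intro w
        simp only [hrdef]
        rw [← Finset.sum_div, ← Finset.mul_sum, mul_div_assoc]
      rw [Finset.sum_congr rfl fun w _ => e1 w, ← Finset.sum_mul, hmargW, hmargZ]
      rcases eq_or_lt_of_le (hY0 y) with h | h
      · rw [← h]; simp
      · rw [div_self (ne_of_gt h), mul_one]
    calc ∑ y, ∑ wz : α × γ, r (y, wz) ≤ ∑ y, qY y :=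
          Finset.sum_le_sum fun y _ => inner y
      _ = ∑ v, q v := pmap_sum _ q
      _ = 1 := hq1
  have key := gibbs hq0 hr0 hz hs
  have expand : ∀ v, q v * Real.log (r v / q v)
      = q v * Real.log (qYW (v.1, v.2.1)) + q v * Real.log (qYZ (v.1, v.2.2))
        - q v * Real.log (qY v.1) - q v * Real.log (q v) := by
    intro v
    rcases eq_or_lt_of_le (hq0 v) with h | h
    · simp [← h]
    · have h1 := lt_of_lt_of_le h (hleYW v)
      have h2 := lt_of_lt_of_le h (hleYZ v)
      have h3 := lt_of_lt_of_le h (hleY v)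
      rw [hrdef]
      rw [Real.log_div (by positivity) (ne_of_gt h),
        Real.log_div (by positivity) (ne_of_gt h3),
        Real.log_mul (ne_of_gt h1) (ne_of_gt h2)]
      ring
  rw [Finset.sum_congr rfl fun v _ => expand v] at key
  have E0 : ent q = -∑ v, q v * Real.log (q v) := rfl
  have EY : ent (pmap Y p) = -∑ v, q v * Real.log (qY v.1) := by
    rw [hY, hqY]; exact ent_eq (fun v : β × α × γ => v.1) q
  have EYW : ent (pmap (fun ω => (Y ω, W ω)) p)
      = -∑ v, q v * Real.log (qYW (v.1, v.2.1)) := by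
    rw [hYW, hqYW]; exact ent_eq (fun v : β × α × γ => (v.1, v.2.1)) q
  have EYZ : ent (pmap (fun ω => (Y ω, Z ω)) p)
      = -∑ v, q v * Real.log (qYZ (v.1, v.2.2)) := by
    rw [hYZ, hqYZ]; exact ent_eq (fun v : β × α × γ => (v.1, v.2.2)) q
  rw [E0, EY, EYW, EYZ]
  have s1 : ∑ v, (q v * Real.log (qYW (v.1, v.2.1)) + q v * Real.log (qYZ (v.1, v.2.2))
      - q v * Real.log (qY v.1) - q v * Real.log (q v))
      = ∑ v, q v * Real.log (qYW (v.1, v.2.1)) + ∑ v, q v * Real.log (qYZ (v.1, v.2.2))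
        - ∑ v, q v * Real.log (qY v.1) - ∑ v, q v * Real.log (q v) := by
    rw [Finset.sum_sub_distrib, Finset.sum_sub_distrib, Finset.sum_add_distrib]
  rw [s1] at key
  linarith [key]

lemma ent_condsub {k : ℕ} {U : Fin k → Type*} [∀ j, Fintype (U j)]
    (X : Ω → α) (Uv : Ω → ∀ j, U j) {p : Ω → ℝ} (hp : IsPMF p) :
    ent (pmap (fun ω => (X ω, Uv ω)) p) + (k : ℝ) * ent (pmap X p) ≤
      (∑ j, ent (pmap (fun ω => (X ω, Uv ω j)) p)) + ent (pmap X p) := by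
  set q := pmap (fun ω => (X ω, Uv ω)) p with hqdef
  have hq0 : ∀ v, 0 ≤ q v := pmap_nonneg _ hp.1
  have hq1 : ∑ v, q v = 1 := by rw [hqdef, pmap_sum _ p, hp.2]
  have hX : pmap X p = pmap (fun v : α × (∀ j, U j) => v.1) q := by rw [hqdef, pmap_comp]
  have hXj : ∀ j, pmap (fun ω => (X ω, Uv ω j)) p
      = pmap (fun v : α × (∀ j, U j) => (v.1, v.2 j)) q := by
    intro j; rw [hqdef, pmap_comp]
  set qX := pmap (fun v : α × (∀ j, U j) => v.1) q with hqX
  set qj : ∀ j : Fin k, α × U j → ℝ :=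
    fun j => pmap (fun v : α × (∀ j, U j) => (v.1, v.2 j)) q with hqj
  have hX0 : ∀ x, 0 ≤ qX x := pmap_nonneg _ hq0
  have hj0 : ∀ j v, 0 ≤ qj j v := fun j => pmap_nonneg _ hq0
  have hleX : ∀ v : α × (∀ j, U j), q v ≤ qX v.1 :=
    fun v => le_pmap (fun v : α × (∀ j, U j) => v.1) hq0 v
  have hlej : ∀ (j) (v : α × (∀ j, U j)), q v ≤ qj j (v.1, v.2 j) :=
    fun j v => le_pmap (fun v : α × (∀ j, U j) => (v.1, v.2 j)) hq0 v
  have hmarg : ∀ (j) (x : α), ∑ a : U j, qj j (x, a) = qX x :=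
    fun j x => pmap_marg_right _ _ q x
  set r : α × (∀ j, U j) → ℝ :=
    fun v => qX v.1 * ∏ j, (qj j (v.1, v.2 j) / qX v.1) with hrdef
  have hr0 : ∀ v, 0 ≤ r v := fun v =>
    mul_nonneg (hX0 _) (Finset.prod_nonneg fun j _ => div_nonneg (hj0 j _) (hX0 _))
  have hrpos : ∀ v, 0 < q v → 0 < r v := by
    intro v hv
    have hx : 0 < qX v.1 := lt_of_lt_of_le hv (hleX v)
    exact mul_pos hx (Finset.prod_pos fun j _ =>
      div_pos (lt_of_lt_of_le hv (hlej j v)) hx)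
  have hz : ∀ v, r v = 0 → q v = 0 := by
    intro v hrv
    by_contra h
    have := hrpos v (lt_of_le_of_ne (hq0 v) (Ne.symm h))
    linarith
  have hs : ∑ v, r v ≤ ∑ v, q v := by
    rw [hq1, Fintype.sum_prod_type]
    have inner : ∀ x : α, (∑ u : ∀ j, U j, r (x, u)) ≤ qX x := by
      intro x
      have e1 : ∀ u : ∀ j, U j, r (x, u) = qX x * ∏ j, (qj j (x, u j) / qX x) := by
        intro u; rw [hrdef]
      rw [Finset.sum_congr rfl fun u _ => e1 u, ← Finset.mul_sum]
      have e2 : ∑ u : ∀ j, U j, ∏ j, (qj j (x, u j) / qX x)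
          = ∏ j, ∑ a : U j, (qj j (x, a) / qX x) := by
        rw [Finset.prod_univ_sum]
        rw [Fintype.piFinset_univ]
      rw [e2]
      rcases eq_or_lt_of_le (hX0 x) with h | h
      · rw [← h]; simp
      · have e3 : ∀ j : Fin k, ∑ a : U j, (qj j (x, a) / qX x) = 1 := by
          intro j
          rw [← Finset.sum_div, hmarg j x, div_self (ne_of_gt h)]
        rw [Finset.prod_congr rfl fun j _ => e3 j, Finset.prod_const_one, mul_one]
    calc ∑ x, ∑ u : ∀ j, U j, r (x, u) ≤ ∑ x, qX x :=
          Finset.sum_le_sum fun x _ => inner x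
      _ = ∑ v, q v := pmap_sum _ q
      _ = 1 := hq1
  have key := gibbs hq0 hr0 hz hs
  have expand : ∀ v, q v * Real.log (r v / q v)
      = (∑ j, q v * Real.log (qj j (v.1, v.2 j))) + q v * Real.log (qX v.1)
        - (k : ℝ) * (q v * Real.log (qX v.1)) - q v * Real.log (q v) := by
    intro v
    rcases eq_or_lt_of_le (hq0 v) with h | h
    · simp [← h]
    · have hx : 0 < qX v.1 := lt_of_lt_of_le h (hleX v)
      have hjv : ∀ j, 0 < qj j (v.1, v.2 j) := fun j => lt_of_lt_of_le h (hlej j v)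
      have hprod : ∀ j ∈ Finset.univ, qj j (v.1, v.2 j) / qX v.1 ≠ 0 :=
        fun j _ => ne_of_gt (div_pos (hjv j) hx)
      have hlr : Real.log (r v / q v)
          = Real.log (qX v.1) + (∑ j, (Real.log (qj j (v.1, v.2 j)) - Real.log (qX v.1)))
            - Real.log (q v) := by
        have hrv : r v = qX v.1 * ∏ j, (qj j (v.1, v.2 j) / qX v.1) := rfl
        rw [Real.log_div (ne_of_gt (hrpos v h)) (ne_of_gt h), hrv,
          Real.log_mul (ne_of_gt hx) (Finset.prod_ne_zero_iff.mpr hprod),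
          Real.log_prod hprod]
        congr 2
        exact Finset.sum_congr rfl fun j _ =>
          Real.log_div (ne_of_gt (hjv j)) (ne_of_gt hx)
      rw [hlr]
      rw [Finset.sum_sub_distrib, Finset.sum_const, Finset.card_univ, Fintype.card_fin,
        nsmul_eq_mul]
      simp only [mul_sub, mul_add, Finset.mul_sum]
      ring
  rw [Finset.sum_congr rfl fun v _ => expand v] at key
  have split : ∑ v, ((∑ j, q v * Real.log (qj j (v.1, v.2 j))) + q v * Real.log (qX v.1)
        - (k : ℝ) * (q v * Real.log (qX v.1)) - q v * Real.log (q v))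
      = (∑ j, ∑ v, q v * Real.log (qj j (v.1, v.2 j))) + ∑ v, q v * Real.log (qX v.1)
        - (k : ℝ) * ∑ v, q v * Real.log (qX v.1) - ∑ v, q v * Real.log (q v) := by
    rw [Finset.sum_sub_distrib, Finset.sum_sub_distrib, Finset.sum_add_distrib,
      Finset.sum_comm, ← Finset.mul_sum]
  rw [split] at key
  have E0 : ent q = -∑ v, q v * Real.log (q v) := rfl
  have EX : ent (pmap X p) = -∑ v, q v * Real.log (qX v.1) := by
    rw [hX, hqX]; exact ent_eq (fun v : α × (∀ j, U j) => v.1) q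
  have Ej : ∑ j, ent (pmap (fun ω => (X ω, Uv ω j)) p)
      = -∑ j, ∑ v, q v * Real.log (qj j (v.1, v.2 j)) := by
    rw [← Finset.sum_neg_distrib]
    refine Finset.sum_congr rfl fun j _ => ?_
    rw [hXj j]
    exact ent_eq (fun v : α × (∀ j, U j) => (v.1, v.2 j)) q
  rw [E0, EX, Ej]
  linarith [key]

end aux

/-- for jointly distributed `X'`, `S`, `U_1, …, U_k`,
`∑ j, I(X';U_j) ≤ I(X';S) + H(U_1,…,U_k | S) + C(U_1,…,U_k)`,
where `C(U_1,…,U_k) = ∑ j H(U_j) - H(U_1,…,U_k)` is the total correlation. -/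
theorem stmt2 {Ω A S : Type*} {k : ℕ} {U : Fin k → Type*}
    [Fintype Ω] [Fintype A] [Fintype S] [∀ j, Fintype (U j)]
    (X' : Ω → A) (Sv : Ω → S) (Uv : Ω → ∀ j, U j) (p : Ω → ℝ) (hp : IsPMF p) :
    ∑ j, mi X' (fun ω => Uv ω j) p ≤
      mi X' Sv p + condH Uv Sv p +
        ((∑ j, H (fun ω => Uv ω j) p) - H Uv p) := by
  have F1 : ent (pmap (fun ω => (X' ω, Sv ω)) p)
      ≤ ent (pmap (fun ω => (Uv ω, (X' ω, Sv ω))) p) :=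
    ent_mono Uv (fun ω => (X' ω, Sv ω)) hp.1
  have F2 : ent (pmap (fun ω => (Uv ω, (X' ω, Sv ω))) p) + ent (pmap Uv p)
      ≤ ent (pmap (fun ω => (Uv ω, X' ω)) p) + ent (pmap (fun ω => (Uv ω, Sv ω)) p) :=
    ent_submod Uv X' Sv hp
  have F3 : ent (pmap (fun ω => (Uv ω, X' ω)) p)
      = ent (pmap (fun ω => (X' ω, Uv ω)) p) := by
    have e : pmap (fun ω => (Uv ω, X' ω)) p
        = pmap Prod.swap (pmap (fun ω => (X' ω, Uv ω)) p) :=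
      (pmap_comp Prod.swap (fun ω => (X' ω, Uv ω)) p).symm
    rw [e, ent_pmap_inj Prod.swap_injective]
  have F4 : ent (pmap (fun ω => (X' ω, Uv ω)) p) + (k : ℝ) * ent (pmap X' p)
      ≤ (∑ j, ent (pmap (fun ω => (X' ω, Uv ω j)) p)) + ent (pmap X' p) :=
    ent_condsub X' Uv hp
  simp only [mi, condH, H]
  rw [Finset.sum_sub_distrib, Finset.sum_add_distrib, Finset.sum_const, Finset.card_univ,
    Fintype.card_fin, nsmul_eq_mul]
  linarith [F1, F2, F3, F4]
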